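/- Let B(t) be a formal matrix-valued power series (B ∈ ℂ[[t¹,…,t^N]] ⊗ End(V₁), dim V₁ = N) solving the commutativity equations [∂B/∂t^i, ∂B/∂t^j] = 0 for all i,j, and suppose h ∈ V₁ is a primitive vector, i.e. the vectors (∂B/∂t^k)|_{t=0} · h, k = 1,…,N, form a basis of V₁. Then, after changing the basis of the source so that (∂B/∂t^k)(t) · h has constant components δ^i_k (equivalently B(t)h = t + const componentwise), the 2-form identity dB ∧ d(Bh) = 0 holds, and consequently ∂B^i_μ/∂t^ν = ∂B^i_ν/∂t^μ for all i, μ, ν; hence there exist formal power series F^i ∈ ℂ[[t]] with B^i_j = ∂F^i/∂t^j. -/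

import Mathlib

noncomputable section

/-- Partial derivative `∂f/∂tᵏ` of a scalar function of `N` complex variables. -/
def pd {N : ℕ} (f : (Fin N → ℂ) → ℂ) (k : Fin N) : (Fin N → ℂ) → ℂ :=
  fun u => fderiv ℂ f u (Pi.single k 1)

/-- Entrywise partial derivative of a matrix-valued function. -/
def pdM {N : ℕ} (B : (Fin N → ℂ) → Matrix (Fin N) (Fin N) ℂ) (i : Fin N)
    (u : Fin N → ℂ) : Matrix (Fin N) (Fin N) ℂ :=
  Matrix.of fun j k => pd (fun v => B v j k) i u

lemma clm_apply_eq_sum {N : ℕ} (f : (Fin N → ℂ) →L[ℂ] ℂ) (u : Fin N → ℂ) :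
    f u = ∑ j, u j * f (Pi.single j 1) := by
  conv_lhs => rw [pi_eq_sum_univ u]
  rw [map_sum]
  refine Finset.sum_congr rfl fun j _ => ?_
  rw [f.map_smul, smul_eq_mul]
  congr 2
  ext k
  simp [Pi.single_apply, eq_comm]

/-- If `B` solves the commutativity equations `[∂B/∂tⁱ, ∂B/∂tʲ] = 0` and the
primitive vector `h` is normalized so that `∂_k(Bh)ⁱ = δⁱ_k` (i.e. `B(t)h =
t + const`), then `∂B^i_μ/∂t^ν = ∂B^i_ν/∂t^μ`, and hence there exist
potentials `Fⁱ` with `B^i_j = ∂Fⁱ/∂tʲ`. -/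
theorem stmt17 {N : ℕ} (B : (Fin N → ℂ) → Matrix (Fin N) (Fin N) ℂ)
    (h : Fin N → ℂ)
    (hB : ∀ i j : Fin N, ContDiff ℂ ⊤ (fun u => B u i j))
    (hcomm : ∀ i j : Fin N, ∀ u,
      pdM B i u * pdM B j u = pdM B j u * pdM B i u)
    (hprim : ∀ u, ∀ i k : Fin N,
      pd (fun v => ∑ μ : Fin N, B v i μ * h μ) k u = if i = k then 1 else 0) :
    (∀ i μ ν : Fin N, ∀ u,
      pd (fun v => B v i μ) ν u = pd (fun v => B v i ν) μ u) ∧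
    ∃ F : Fin N → (Fin N → ℂ) → ℂ,
      ∀ i j : Fin N, ∀ u, B u i j = pd (F i) j u := by
  have hdiff : ∀ (i j : Fin N) w, DifferentiableAt ℂ (fun v => B v i j) w :=
    fun i j w => ((hB i j).differentiable (by simp)).differentiableAt
  have key : ∀ (u : Fin N → ℂ) (i k : Fin N),
      ∑ μ, pd (fun v => B v i μ) k u * h μ = if i = k then 1 else 0 := by
    intro u i k
    have h1 : HasFDerivAt (fun v => ∑ μ : Fin N, B v i μ * h μ)
        (∑ μ : Fin N, h μ • fderiv ℂ (fun v => B v i μ) u) u := by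
      apply HasFDerivAt.fun_sum
      intro μ _
      simpa [smul_smul, mul_comm] using ((hdiff i μ u).hasFDerivAt.mul_const (h μ))
    have h2 := hprim u i k
    rw [pd, h1.fderiv] at h2
    rw [← h2]
    simp [pd, mul_comm]
  have keyvec : ∀ (u : Fin N → ℂ) (k : Fin N),
      Matrix.mulVec (pdM B k u) h = Pi.single k 1 := by
    intro u k
    funext i
    simpa [Matrix.mulVec, dotProduct, pdM, Pi.single_apply] using key u i k
  have sym : ∀ (i μ ν : Fin N) (u : Fin N → ℂ),
      pd (fun v => B v i μ) ν u = pd (fun v => B v i ν) μ u := by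
    intro i μ ν u
    have e1 : (Matrix.mulVec (pdM B ν u * pdM B μ u) h) i = pd (fun v => B v i μ) ν u := by
      rw [← Matrix.mulVec_mulVec, keyvec]
      simp [pdM]
    have e2 : (Matrix.mulVec (pdM B μ u * pdM B ν u) h) i = pd (fun v => B v i ν) μ u := by
      rw [← Matrix.mulVec_mulVec, keyvec]
      simp [pdM]
    rw [← e1, ← e2, hcomm]
  refine ⟨fun i μ ν u => sym i μ ν u,
    ⟨fun i v => ∫ s in (0:ℝ)..1, ∑ k : Fin N, B ((s:ℂ) • v) i k * v k, ?_⟩⟩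
  intro i j u
  set D : Fin N → (Fin N → ℂ) → ((Fin N → ℂ) →L[ℂ] ℂ) :=
    fun k w => fderiv ℂ (fun v => B v i k) w with hD
  set F' : (Fin N → ℂ) → ℝ → ((Fin N → ℂ) →L[ℂ] ℂ) := fun x t =>
    ∑ k : Fin N, ((B ((t:ℂ) • x) i k) • ContinuousLinearMap.proj k
       + (x k) • ((D k ((t:ℂ) • x)).comp
           ((t:ℂ) • ContinuousLinearMap.id ℂ (Fin N → ℂ)))) with hF'
  have hasF' : ∀ (x : Fin N → ℂ) (t : ℝ),
      HasFDerivAt (fun y => ∑ k : Fin N, B ((t:ℂ) • y) i k * y k) (F' x t) x := by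
    intro x t
    apply HasFDerivAt.fun_sum
    intro k _
    have h1 : HasFDerivAt (fun y : Fin N → ℂ => (t:ℂ) • y)
        ((t:ℂ) • ContinuousLinearMap.id ℂ (Fin N → ℂ)) x :=
      (hasFDerivAt_id x).const_smul (t:ℂ)
    have h2 : HasFDerivAt (fun y : Fin N → ℂ => B ((t:ℂ) • y) i k)
        ((D k ((t:ℂ) • x)).comp ((t:ℂ) • ContinuousLinearMap.id ℂ (Fin N → ℂ))) x :=
      ((hdiff i k _).hasFDerivAt).comp x h1
    have h3 : HasFDerivAt (fun y : Fin N → ℂ => y k)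
        (ContinuousLinearMap.proj k : (Fin N → ℂ) →L[ℂ] ℂ) x :=
      hasFDerivAt_apply k x
    simpa [Pi.mul_def] using h2.mul h3
  have contD : ∀ k : Fin N, Continuous (D k) := fun k =>
    (hB i k).continuous_fderiv (by simp)
  have contF' : Continuous fun p : (Fin N → ℂ) × ℝ => F' p.1 p.2 := by
    rw [hF']
    apply continuous_finset_sum
    intro k _
    apply Continuous.add
    · exact (((hB i k).continuous).comp ((Complex.continuous_ofReal.comp
        continuous_snd).smul continuous_fst)).smul continuous_const
    · apply Continuous.smul (continuous_apply k |>.comp continuous_fst)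
      apply Continuous.clm_comp
      · exact (contD k).comp ((Complex.continuous_ofReal.comp
          continuous_snd).smul continuous_fst)
      · exact ((Complex.continuous_ofReal.comp continuous_snd)).smul continuous_const
  obtain ⟨C, hC⟩ := ((isCompact_closedBall u 1).prod isCompact_Icc).exists_bound_of_continuousOn
    (f := fun p : (Fin N → ℂ) × ℝ => F' p.1 p.2) contF'.continuousOn
  have main : HasFDerivAt (fun v => ∫ s in (0:ℝ)..1, ∑ k : Fin N, B ((s:ℂ) • v) i k * v k)
      (∫ t in (0:ℝ)..1, F' u t) u := by
    apply intervalIntegral.hasFDerivAt_integral_of_dominated_of_fderiv_le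
      (s := Metric.ball u 1) (bound := fun _ => C) (Metric.ball_mem_nhds u one_pos)
    · filter_upwards with x
      apply Continuous.aestronglyMeasurable
      apply continuous_finset_sum
      intro k _
      exact (((hB i k).continuous).comp
        ((Complex.continuous_ofReal.smul continuous_const))).mul continuous_const
    · apply Continuous.intervalIntegrable
      apply continuous_finset_sum
      intro k _
      exact (((hB i k).continuous).comp
        ((Complex.continuous_ofReal.smul continuous_const))).mul continuous_const
    · exact (contF'.comp (continuous_const.prodMk continuous_id)).aestronglyMeasurable
    · filter_upwards with t ht x hx
      exact hC (x, t) ⟨Metric.ball_subset_closedBall hx,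
        Set.mem_of_subset_of_mem (by rw [Set.uIoc_of_le zero_le_one]; exact Set.Ioc_subset_Icc_self) ht⟩
    · exact intervalIntegrable_const
    · filter_upwards with t ht x hx
      exact hasF' x t
  have hFint : IntervalIntegrable (F' u) MeasureTheory.volume 0 1 :=
    (contF'.comp (continuous_const.prodMk continuous_id)).intervalIntegrable 0 1
  have happly : pd (fun v => ∫ s in (0:ℝ)..1, ∑ k : Fin N, B ((s:ℂ) • v) i k * v k) j u
      = ∫ t in (0:ℝ)..1, (F' u t) (Pi.single j 1) := by
    rw [pd, main.fderiv, ContinuousLinearMap.intervalIntegral_apply hFint]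
  have hval : ∀ t : ℝ, (F' u t) (Pi.single j 1)
      = B ((t:ℂ) • u) i j + (t:ℂ) * (D j ((t:ℂ) • u)) u := by
    intro t
    rw [hF']
    simp only [ContinuousLinearMap.sum_apply, ContinuousLinearMap.add_apply,
      ContinuousLinearMap.smul_apply, ContinuousLinearMap.proj_apply,
      ContinuousLinearMap.comp_apply, ContinuousLinearMap.id_apply,
      ContinuousLinearMap.map_smul]
    rw [Finset.sum_add_distrib]
    congr 1
    · simp [Pi.single_apply]
    · rw [clm_apply_eq_sum (D j ((t:ℂ) • u)) u, Finset.mul_sum]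
      refine Finset.sum_congr rfl fun k _ => ?_
      have : (D k ((t:ℂ) • u)) (Pi.single j 1) = (D j ((t:ℂ) • u)) (Pi.single k 1) :=
        sym i k j ((t:ℂ) • u)
      simp only [smul_eq_mul, this]
      ring
  have hderiv : ∀ t : ℝ, HasDerivAt (fun s : ℝ => (s:ℂ) * B ((s:ℂ) • u) i j)
      (B ((t:ℂ) • u) i j + (t:ℂ) * (D j ((t:ℂ) • u)) u) t := by
    intro t
    have h0 : HasDerivAt (fun s : ℝ => (s:ℂ)) 1 t := by
      simpa using (hasDerivAt_id t).ofReal_comp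
    have h1 : HasDerivAt (fun s : ℝ => ((s:ℂ) • u)) u t := by
      simpa using h0.smul_const u
    have h2 : HasDerivAt (fun s : ℝ => B ((s:ℂ) • u) i j) ((D j ((t:ℂ) • u)) u) t := by
      have := ((hdiff i j ((t:ℂ) • u)).hasFDerivAt.restrictScalars ℝ).comp_hasDerivAt t h1
      simpa [Function.comp_def] using this
    simpa [Pi.mul_def] using h0.mul h2
  have hcont : Continuous fun t : ℝ => B ((t:ℂ) • u) i j + (t:ℂ) * (D j ((t:ℂ) • u)) u := by
    apply Continuous.add
    · exact ((hB i j).continuous).comp (Complex.continuous_ofReal.smul continuous_const)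
    · exact Complex.continuous_ofReal.mul
        (((contD j).comp (Complex.continuous_ofReal.smul continuous_const)).clm_apply
          continuous_const)
  have hFTC : (∫ t in (0:ℝ)..1, (B ((t:ℂ) • u) i j + (t:ℂ) * (D j ((t:ℂ) • u)) u))
      = B u i j := by
    rw [intervalIntegral.integral_eq_sub_of_hasDerivAt (fun t _ => hderiv t)
      (hcont.intervalIntegrable 0 1)]
    simp
  rw [happly]
  simp_rw [hval]
  rw [hFTC]
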